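/- For any positive integer n, the product of P(λ) over all partitions λ of n equals the product of F(λ) over all partitions λ of n, where for a partition λ = 1^{i_1} 2^{i_2} ⋯ (with i_k parts equal to k), P(λ) = 1^{i_1} · 2^{i_2} ⋯ and F(λ) = i_1! · i_2! ⋯. -/
import Mathlib


/-- `P(λ) = ∏_k k^{i_k}`, the product of all parts of the partition. -/
def partitionP {n : ℕ} (l : Nat.Partition n) : ℕ := l.parts.prod

/-- `F(λ) = ∏_k (i_k)!`, the product of factorials of the multiplicities. -/
def partitionF {n : ℕ} (l : Nat.Partition n) : ℕ :=
  ∏ k ∈ l.parts.toFinset, Nat.factorial (l.parts.count k)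

namespace PPF

open Finset

lemma multiset_sum_le_of_le {s t : Multiset ℕ} (h : s ≤ t) : s.sum ≤ t.sum := by
  obtain ⟨u, rfl⟩ := Multiset.le_iff_exists_add.mp h
  simp

lemma count_mul_le {n : ℕ} (l : Nat.Partition n) (k : ℕ) :
    l.parts.count k * k ≤ n := by
  have h : Multiset.replicate (l.parts.count k) k ≤ l.parts :=
    Multiset.le_count_iff_replicate_le.mp le_rfl
  have := multiset_sum_le_of_le h
  simpa [Multiset.sum_replicate, smul_eq_mul, l.parts_sum] using this

lemma count_le {n : ℕ} (l : Nat.Partition n) {k : ℕ} (hk : 1 ≤ k) :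
    l.parts.count k ≤ n :=
  le_trans (Nat.le_mul_of_pos_right _ hk) (count_mul_le l k)

lemma jk_le {n : ℕ} (l : Nat.Partition n) {k j : ℕ} (hj : j ≤ l.parts.count k) :
    j * k ≤ n :=
  le_trans (Nat.mul_le_mul_right k hj) (count_mul_le l k)

/-- Removing `j` copies of the part `k` gives a bijection between partitions of `n`
with at least `j` parts equal to `k` and partitions of `n - j*k`. -/
def removeEquiv (n k j : ℕ) (hk : 0 < k) (hjk : j * k ≤ n) :
    {l : Nat.Partition n // j ≤ l.parts.count k} ≃ Nat.Partition (n - j * k) where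
  toFun l := ⟨l.1.parts - Multiset.replicate j k,
    fun hi => l.1.parts_pos (Multiset.mem_of_le tsub_le_self hi),
    by
      have hle : Multiset.replicate j k ≤ l.1.parts :=
        Multiset.le_count_iff_replicate_le.mp l.2
      have h2 := congrArg Multiset.sum (tsub_add_cancel_of_le hle)
      rw [Multiset.sum_add, Multiset.sum_replicate, smul_eq_mul, l.1.parts_sum] at h2
      omega⟩
  invFun m := ⟨⟨m.parts + Multiset.replicate j k,
    by
      intro i hi
      rcases Multiset.mem_add.mp hi with h | h
      · exact m.parts_pos h
      · rw [Multiset.eq_of_mem_replicate h]; exact hk,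
    by
      rw [Multiset.sum_add, Multiset.sum_replicate, smul_eq_mul, m.parts_sum]
      omega⟩,
    by simp [Multiset.count_replicate]⟩
  left_inv l := by
    apply Subtype.ext
    apply Nat.Partition.ext
    exact tsub_add_cancel_of_le (Multiset.le_count_iff_replicate_le.mp l.2)
  right_inv m := by
    apply Nat.Partition.ext
    simp

/-- `N n k j` is the number of partitions of `n` with at least `j` parts equal to `k`. -/
def N (n k j : ℕ) : ℕ :=
  ((Finset.univ : Finset (Nat.Partition n)).filter (fun l => j ≤ l.parts.count k)).card

lemma N_eq_card (n k j : ℕ) (hk : 0 < k) (hjk : j * k ≤ n) :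
    N n k j = Fintype.card (Nat.Partition (n - j * k)) := by
  rw [N, ← Fintype.card_subtype]
  exact Fintype.card_congr (removeEquiv n k j hk hjk)

lemma N_eq_zero (n k j : ℕ) (hjk : n < j * k) : N n k j = 0 := by
  rw [N, Finset.card_eq_zero, Finset.filter_eq_empty_iff]
  intro l _ h
  exact absurd (jk_le l h) (not_le.mpr hjk)

lemma N_symm (n : ℕ) {k j : ℕ} (hk : 0 < k) (hj : 0 < j) : N n k j = N n j k := by
  rcases le_or_gt (j * k) n with h | h
  · rw [N_eq_card n k j hk h, N_eq_card n j k hj (by rwa [mul_comm]), mul_comm]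
  · rw [N_eq_zero n k j h, N_eq_zero n j k (by rwa [mul_comm])]

lemma toFinset_subset {n : ℕ} (l : Nat.Partition n) : l.parts.toFinset ⊆ Icc 1 n := by
  intro a ha
  rw [Multiset.mem_toFinset] at ha
  rw [Finset.mem_Icc]
  constructor
  · exact l.parts_pos ha
  · calc a ≤ l.parts.sum := Multiset.single_le_sum (fun _ _ => Nat.zero_le _) _ ha
      _ = n := l.parts_sum

lemma partitionP_eq {n : ℕ} (l : Nat.Partition n) :
    partitionP l = ∏ k ∈ Icc 1 n, k ^ l.parts.count k := by
  rw [partitionP, Finset.prod_multiset_count]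
  refine Finset.prod_subset (toFinset_subset l) ?_
  intro x _ hx
  rw [Multiset.mem_toFinset] at hx
  rw [Multiset.count_eq_zero_of_notMem hx, pow_zero]

lemma partitionF_eq {n : ℕ} (l : Nat.Partition n) :
    partitionF l = ∏ k ∈ Icc 1 n, Nat.factorial (l.parts.count k) := by
  rw [partitionF]
  refine Finset.prod_subset (toFinset_subset l) ?_
  intro x _ hx
  rw [Multiset.mem_toFinset] at hx
  rw [Multiset.count_eq_zero_of_notMem hx, Nat.factorial_zero]

lemma factorial_eq_prod {c n : ℕ} (hc : c ≤ n) :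
    Nat.factorial c = ∏ j ∈ Icc 1 n, j ^ (if j ≤ c then 1 else 0) := by
  have h1 : Nat.factorial c = ∏ j ∈ Icc 1 c, j := by
    rw [← Finset.Ico_add_one_right_eq_Icc, Finset.prod_Ico_id_eq_factorial]
  have h2 : Icc 1 c = (Icc 1 n).filter (fun j => j ≤ c) := by
    ext j
    simp only [Finset.mem_filter, Finset.mem_Icc]
    omega
  rw [h1, h2, Finset.prod_filter]
  exact Finset.prod_congr rfl (fun j _ => by split <;> simp)

lemma count_eq_sum {c n : ℕ} (hc : c ≤ n) :
    c = ∑ j ∈ Icc 1 n, (if j ≤ c then 1 else 0) := by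
  rw [← Finset.card_filter]
  have : Finset.filter (fun j => j ≤ c) (Icc 1 n) = Icc 1 c := by
    ext j
    simp only [Finset.mem_filter, Finset.mem_Icc]
    omega
  rw [this, Nat.card_Icc]
  omega

end PPF

set_option linter.unusedVariables false in
theorem prod_P_eq_prod_F (n : ℕ) (hn : 0 < n) :
    ∏ l : Nat.Partition n, partitionP l = ∏ l : Nat.Partition n, partitionF l := by
  classical
  open Finset PPF in
  have hP : ∏ l : Nat.Partition n, partitionP l
      = ∏ k ∈ Icc 1 n, ∏ j ∈ Icc 1 n, k ^ N n k j := by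
    calc ∏ l : Nat.Partition n, partitionP l
        = ∏ l : Nat.Partition n, ∏ k ∈ Icc 1 n, k ^ l.parts.count k := by
          exact Finset.prod_congr rfl (fun l _ => partitionP_eq l)
      _ = ∏ k ∈ Icc 1 n, ∏ l : Nat.Partition n, k ^ l.parts.count k :=
          Finset.prod_comm
      _ = ∏ k ∈ Icc 1 n, k ^ ∑ l : Nat.Partition n, l.parts.count k := by
          exact Finset.prod_congr rfl (fun k _ => Finset.prod_pow_eq_pow_sum _ _ _)
      _ = ∏ k ∈ Icc 1 n, ∏ j ∈ Icc 1 n, k ^ N n k j := by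
          refine Finset.prod_congr rfl (fun k hk => ?_)
          rw [Finset.prod_pow_eq_pow_sum]
          congr 1
          rw [Finset.sum_congr rfl
            (fun l _ => count_eq_sum (count_le l (Finset.mem_Icc.mp hk).1)),
            Finset.sum_comm]
          refine Finset.sum_congr rfl (fun j _ => ?_)
          rw [N, Finset.card_filter]
  have hF : ∏ l : Nat.Partition n, partitionF l
      = ∏ k ∈ Icc 1 n, ∏ j ∈ Icc 1 n, j ^ N n k j := by
    calc ∏ l : Nat.Partition n, partitionF l
        = ∏ l : Nat.Partition n, ∏ k ∈ Icc 1 n, Nat.factorial (l.parts.count k) := by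
          exact Finset.prod_congr rfl (fun l _ => partitionF_eq l)
      _ = ∏ k ∈ Icc 1 n, ∏ l : Nat.Partition n, Nat.factorial (l.parts.count k) :=
          Finset.prod_comm
      _ = ∏ k ∈ Icc 1 n, ∏ j ∈ Icc 1 n, j ^ N n k j := by
          refine Finset.prod_congr rfl (fun k hk => ?_)
          rw [Finset.prod_congr rfl
            (fun l _ => factorial_eq_prod (count_le l (Finset.mem_Icc.mp hk).1)),
            Finset.prod_comm]
          refine Finset.prod_congr rfl (fun j _ => ?_)
          rw [Finset.prod_pow_eq_pow_sum]
          congr 1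
          rw [N, Finset.card_filter]
  rw [hP, hF]
  rw [Finset.prod_comm]
  refine Finset.prod_congr rfl (fun k hk => Finset.prod_congr rfl (fun j hj => ?_))
  rw [N_symm n (Finset.mem_Icc.mp hj).1 (Finset.mem_Icc.mp hk).1]
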